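/- arXiv:2209.07719 — 3 statements merged into one kernel-verified Lean document; each statement's English description precedes it below -/
import Mathlib

section
/- Let N be a positive integer, n a positive divisor of N, and σ₀ = (1 2 … N) ∈ S_N. Let τ be an N-cycle in S_N commuting with σ₀ⁿ, and let a be a positive integer with a ≤ N. Then the n integers τ⁰(a) = a, τ(a), …, τ^{n−1}(a) are pairwise incongruent modulo n, and there exists a unique integer b with 0 ≤ b < N/n and gcd(b, N/n) = 1 such that τⁿ(a) ≡ a + b·n (mod N). -/
open Fin.NatCast

private lemma finRotate_pow_apply' (N : ℕ) (hN : 0 < N) (m : ℕ) (x : Fin N) :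
    ((finRotate N) ^ m) x = x + (haveI : NeZero N := ⟨hN.ne'⟩; (m : Fin N)) := by
  haveI : NeZero N := ⟨hN.ne'⟩
  obtain ⟨M, rfl⟩ : ∃ M, N = M + 1 := ⟨N - 1, (Nat.succ_pred_eq_of_pos hN).symm⟩
  induction m with
  | zero => simp
  | succ k ih =>
    rw [pow_succ', Equiv.Perm.mul_apply, ih, finRotate_succ_apply]
    push_cast
    rw [add_assoc]

/-- **Lemma 1.** Let `n ∣ N`, `σ₀ = (1 2 … N)`, `τ` an `N`-cycle commuting with `σ₀ⁿ`, and
`1 ≤ a ≤ N` (realized as the element `⟨(a−1) % N⟩` of `Fin N`).  Then `a, τ(a), …, τ^{n−1}(a)`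
are pairwise incongruent modulo `n`, and there is a unique `b` with `0 ≤ b < N/n`,
`gcd(b, N/n) = 1` and `τⁿ(a) ≡ a + b·n (mod N)`. -/
theorem orbit_incongruent_mod_n (N n : ℕ) (hN : 0 < N) (hn0 : 0 < n) (hn : n ∣ N)
    (τ : Equiv.Perm (Fin N)) (hτ : τ.IsCycle ∧ τ.support.card = N)
    (hτc : τ ∈ Subgroup.centralizer {(finRotate N) ^ n})
    (a : ℕ) (ha1 : 1 ≤ a) (ha2 : a ≤ N) :
    (∀ k k' : ℕ, k < n → k' < n →
        (((τ ^ k) ⟨(a - 1) % N, Nat.mod_lt _ hN⟩ : Fin N).val + 1 ≡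
          ((τ ^ k') ⟨(a - 1) % N, Nat.mod_lt _ hN⟩ : Fin N).val + 1 [MOD n]) → k = k') ∧
    ∃! b : ℕ, b < N / n ∧ Nat.gcd b (N / n) = 1 ∧
      (((τ ^ n) ⟨(a - 1) % N, Nat.mod_lt _ hN⟩ : Fin N).val + 1 ≡ a + b * n [MOD N]) := by
  haveI : NeZero N := ⟨hN.ne'⟩
  set a₀ : Fin N := ⟨(a - 1) % N, Nat.mod_lt _ hN⟩ with ha₀
  set c : Fin N := (n : Fin N) with hc
  have hnN : n ≤ N := Nat.le_of_dvd hN hn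
  -- τ commutes with adding n
  have hcen : ∀ x : Fin N, τ (x + c) = τ x + c := by
    have h := Subgroup.mem_centralizer_iff.mp hτc ((finRotate N) ^ n) rfl
    intro x
    have h2 := congrArg (fun σ : Equiv.Perm (Fin N) => σ x) h
    simp only [Equiv.Perm.mul_apply, finRotate_pow_apply' N hN] at h2
    exact h2.symm
  have hcenp : ∀ (k : ℕ) (x : Fin N), (τ ^ k) (x + c) = (τ ^ k) x + c := by
    intro k
    induction k with
    | zero => intro x; simp
    | succ m ih =>
      intro x
      rw [pow_succ', Equiv.Perm.mul_apply, Equiv.Perm.mul_apply, ih]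
      exact hcen _
  -- τ^k commutes with adding multiples of n
  have hmulc : ∀ (k j : ℕ) (x : Fin N),
      (τ ^ k) (x + ((j * n : ℕ) : Fin N)) = (τ ^ k) x + ((j * n : ℕ) : Fin N) := by
    intro k j
    induction j with
    | zero => intro x; simp
    | succ i ih =>
      intro x
      have e : (((i + 1) * n : ℕ) : Fin N) = ((i * n : ℕ) : Fin N) + c := by
        rw [hc, add_mul, one_mul, Nat.cast_add]
      rw [e, ← add_assoc, hcenp, ih, add_assoc]
  have hmodN : ∀ u : ℕ, (u % N) ≡ u [MOD n] :=
    fun u => Nat.ModEq.of_dvd hn (Nat.mod_modEq u N)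
  -- τ^k preserves congruence mod n
  have hstep : ∀ (k : ℕ) (x y : Fin N), x.val ≡ y.val [MOD n] →
      ((τ ^ k) x).val ≡ ((τ ^ k) y).val [MOD n] := by
    intro k x y hxy
    set t : ℕ := (y.val + N - x.val) % N with ht
    have htlt : t < N := Nat.mod_lt _ hN
    have hdt : n ∣ t := by
      have h1 : y.val ≡ y.val + N [MOD n] :=
        ((Nat.modEq_iff_dvd' (Nat.le_add_right _ _)).mpr (by simpa using hn))
      have h2 : x.val ≡ y.val + N [MOD n] := hxy.trans h1
      have hxle : x.val ≤ y.val + N := le_trans (Nat.le_of_lt x.isLt) (Nat.le_add_left _ _)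
      exact (Nat.dvd_mod_iff hn).mpr ((Nat.modEq_iff_dvd' hxle).mp h2)
    have e1 : (x.val + t) % N = y.val % N := by
      calc x.val + t ≡ x.val + (y.val + N - x.val) [MOD N] :=
            Nat.ModEq.add_left _ (Nat.mod_modEq _ _)
        _ = y.val + N := by
              have := x.isLt
              omega
        _ ≡ y.val [MOD N] := Nat.add_mod_right y.val N
    have hyx : y = x + (t : Fin N) := by
      apply Fin.ext
      rw [Fin.val_add, Fin.val_natCast, Nat.mod_eq_of_lt htlt, e1,
        Nat.mod_eq_of_lt y.isLt]
    have hyx2 : (τ ^ k) y = (τ ^ k) x + (t : Fin N) := by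
      rw [hyx]
      have e2 : t = (t / n) * n := (Nat.div_mul_cancel hdt).symm
      rw [e2]
      exact hmulc k (t / n) x
    rw [hyx2, Fin.val_add, Fin.val_natCast, Nat.mod_eq_of_lt htlt]
    set w := ((τ ^ k) x).val
    have h2 : w ≡ w + t [MOD n] :=
      (Nat.modEq_iff_dvd' (Nat.le_add_right _ _)).mpr (by simpa using hdt)
    exact h2.trans (hmodN (w + t)).symm
  -- τ moves everything, orbits cover everything
  have hsupp : τ.support = Finset.univ :=
    Finset.eq_univ_of_card _ (by rw [hτ.2]; simp)
  have hmove : ∀ y : Fin N, τ y ≠ y := by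
    intro y
    exact Equiv.Perm.mem_support.mp (hsupp ▸ Finset.mem_univ y)
  have hsurj : ∀ y z : Fin N, ∃ m : ℕ, (τ ^ m) y = z :=
    fun y z => hτ.1.exists_pow_eq (hmove y) (hmove z)
  -- key: if τ^d y ≡ y mod n with 0 < d then n ≤ d
  have key : ∀ (y : Fin N) (d : ℕ), 0 < d → ((τ ^ d) y).val ≡ y.val [MOD n] → n ≤ d := by
    intro y d hd hcong
    have hred : ∀ m : ℕ, ∃ r, r < d ∧ ((τ ^ m) y).val ≡ ((τ ^ r) y).val [MOD n] := by
      intro m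
      induction m using Nat.strong_induction_on with
      | _ m ih =>
        by_cases hm : m < d
        · exact ⟨m, hm, Nat.ModEq.refl _⟩
        · push_neg at hm
          have e3 : (τ ^ m) y = (τ ^ (m - d)) ((τ ^ d) y) := by
            rw [← Equiv.Perm.mul_apply, ← pow_add]
            congr 2
            omega
          have h4 : ((τ ^ m) y).val ≡ ((τ ^ (m - d)) y).val [MOD n] := by
            rw [e3]
            exact hstep (m - d) _ _ hcong
          obtain ⟨r, hr, hcr⟩ := ih (m - d) (by omega)
          exact ⟨r, hr, h4.trans hcr⟩
    have hcover : ∀ t : Fin n, ∃ r, r < d ∧ (t : ℕ) ≡ ((τ ^ r) y).val [MOD n] := by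
      intro t
      obtain ⟨m, hm⟩ := hsurj y ⟨t.val, lt_of_lt_of_le t.isLt hnN⟩
      obtain ⟨r, hr, hcr⟩ := hred m
      refine ⟨r, hr, ?_⟩
      have hval : ((τ ^ m) y).val = (t : ℕ) := by rw [hm]
      rwa [hval] at hcr
    choose g hg1 hg2 using hcover
    have hinj : Function.Injective (fun t : Fin n => (⟨g t, hg1 t⟩ : Fin d)) := by
      intro t t' h
      have hgg : g t = g t' := by simpa [Fin.ext_iff] using h
      have h5 : (t : ℕ) ≡ (t' : ℕ) [MOD n] := by
        have := (hg2 t).trans (hgg ▸ (hg2 t')).symm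
        exact this
      have h6 : (t : ℕ) % n = (t' : ℕ) % n := h5
      rw [Nat.mod_eq_of_lt t.isLt, Nat.mod_eq_of_lt t'.isLt] at h6
      exact Fin.ext h6
    have := Fintype.card_le_of_injective _ hinj
    simpa using this
  -- Part 1 (one-sided)
  have main1 : ∀ k k' : ℕ, k' < n → k ≤ k' →
      ((τ ^ k) a₀).val ≡ ((τ ^ k') a₀).val [MOD n] → k = k' := by
    intro k k' hk' hkk' hcong
    by_contra hne
    have hlt : k < k' := lt_of_le_of_ne hkk' hne
    have e3 : (τ ^ k') a₀ = (τ ^ (k' - k)) ((τ ^ k) a₀) := by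
      rw [← Equiv.Perm.mul_apply, ← pow_add]
      congr 2
      omega
    have := key ((τ ^ k) a₀) (k' - k) (by omega) (by rw [← e3]; exact hcong.symm)
    omega
  have part1 : ∀ k k' : ℕ, k < n → k' < n →
      (((τ ^ k) a₀).val + 1 ≡ ((τ ^ k') a₀).val + 1 [MOD n]) → k = k' := by
    intro k k' hk hk' hcong
    have hcong' : ((τ ^ k) a₀).val ≡ ((τ ^ k') a₀).val [MOD n] :=
      Nat.ModEq.add_right_cancel' 1 hcong
    rcases le_total k k' with h | h
    · exact main1 k k' hk' h hcong'
    · exact (main1 k' k hk h hcong'.symm).symm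
  have main1s : ∀ k k' : ℕ, k < n → k' < n →
      ((τ ^ k) a₀).val ≡ ((τ ^ k') a₀).val [MOD n] → k = k' := by
    intro k k' hk hk' hcong
    rcases le_total k k' with h | h
    · exact main1 k k' hk' h hcong
    · exact (main1 k' k hk h hcong.symm).symm
  refine ⟨part1, ?_⟩
  -- Part 2
  -- first: τ^n a₀ ≡ a₀ mod n
  have hτn_mod : ((τ ^ n) a₀).val ≡ a₀.val [MOD n] := by
    -- the map k ↦ (τ^k a₀).val % n is injective on Fin n, hence surjective
    have hinj : Function.Injective
        (fun k : Fin n => (⟨((τ ^ (k : ℕ)) a₀).val % n, Nat.mod_lt _ hn0⟩ : Fin n)) := by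
      intro k k' h
      have h1 : ((τ ^ (k : ℕ)) a₀).val % n = ((τ ^ (k' : ℕ)) a₀).val % n := by
        simpa [Fin.ext_iff] using h
      exact Fin.ext (main1s (k : ℕ) (k' : ℕ) k.isLt k'.isLt h1)
    have hsur := Finite.surjective_of_injective hinj
    obtain ⟨k, hk⟩ := hsur ⟨((τ ^ n) a₀).val % n, Nat.mod_lt _ hn0⟩
    have hc2 : ((τ ^ n) a₀).val ≡ ((τ ^ (k : ℕ)) a₀).val [MOD n] := by
      have := (Fin.ext_iff.mp hk)
      simpa [Nat.ModEq] using this.symm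
    by_cases hk0 : (k : ℕ) = 0
    · rw [hk0] at hc2
      simpa using hc2
    · exfalso
      have e3 : (τ ^ n) a₀ = (τ ^ (n - (k : ℕ))) ((τ ^ (k : ℕ)) a₀) := by
        rw [← Equiv.Perm.mul_apply, ← pow_add]
        congr 2
        have := k.isLt
        omega
      have := key ((τ ^ (k : ℕ)) a₀) (n - (k : ℕ)) (by have := k.isLt; omega)
        (by rw [← e3]; exact hc2)
      have := k.isLt
      omega
  -- set up b
  set M : ℕ := N / n with hM
  have hNM : N = n * M := (Nat.mul_div_cancel' hn).symm
  have hM0 : 0 < M := by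
    rcases Nat.eq_zero_or_pos M with h | h
    · rw [h, Nat.mul_zero] at hNM; omega
    · exact h
  set u : ℕ := a₀.val with hu
  set v : ℕ := ((τ ^ n) a₀).val with hv
  have hu_eq : u = a - 1 := by
    rw [hu, ha₀]
    exact Nat.mod_eq_of_lt (by omega)
  have hau : a = u + 1 := by omega
  set t : ℕ := (v + N - u) % N with ht
  have htlt : t < N := Nat.mod_lt _ hN
  have hdt : n ∣ t := by
    have h3 : v + N ≡ u [MOD n] := by
      have h4 : v ≡ u [MOD n] := hτn_mod
      have h5 : v + N ≡ v [MOD n] :=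
        ((Nat.modEq_iff_dvd' (Nat.le_add_right _ _)).mpr (by simpa using hn)).symm
      exact h5.trans h4
    have hule : u ≤ v + N := by
      have := a₀.isLt
      omega
    exact (Nat.dvd_mod_iff hn).mpr ((Nat.modEq_iff_dvd' hule).mp h3.symm)
  set b : ℕ := t / n with hb
  have hbn : b * n = t := Nat.div_mul_cancel hdt
  have hblt : b < M := by
    have h2 : n * b < n * M := by
      rw [Nat.mul_comm n b, hbn, ← hNM]
      exact htlt
    exact Nat.lt_of_mul_lt_mul_left h2
  -- v = (u + t) % N  i.e.  τ^n a₀ = a₀ + t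
  have e1 : (u + t) % N = v % N := by
    calc u + t ≡ u + (v + N - u) [MOD N] := Nat.ModEq.add_left _ (Nat.mod_modEq _ _)
      _ = v + N := by
          have := a₀.isLt
          omega
      _ ≡ v [MOD N] := Nat.add_mod_right v N
  have hτna : (τ ^ n) a₀ = a₀ + (t : Fin N) := by
    apply Fin.ext
    rw [Fin.val_add, Fin.val_natCast, Nat.mod_eq_of_lt htlt]
    rw [show a₀.val = u from rfl, e1, ← hv, Nat.mod_eq_of_lt ((τ ^ n) a₀).isLt]
  -- iterate: τ^(n*k) a₀ = a₀ + k*t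
  have hiter : ∀ k : ℕ, (τ ^ (n * k)) a₀ = a₀ + ((k * t : ℕ) : Fin N) := by
    intro k
    induction k with
    | zero => simp
    | succ i ih =>
      have e2 : n * (i + 1) = n * i + n := by ring
      rw [e2, pow_add, Equiv.Perm.mul_apply, hτna]
      have e4 : (t : Fin N) = ((b * n : ℕ) : Fin N) := by rw [hbn]
      rw [e4, hmulc (n * i) b a₀, ← e4, ih]
      rw [add_assoc]
      congr 1
      rw [add_mul, one_mul, Nat.cast_add]
  -- order of τ is N
  have horder : orderOf τ = N := by
    rw [hτ.1.orderOf, hτ.2]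
  -- gcd(b, M) = 1
  have hgcd : Nat.gcd b M = 1 := by
    set g : ℕ := Nat.gcd b M with hg
    have hgM : g ∣ M := Nat.gcd_dvd_right b M
    have hgb : g ∣ b := Nat.gcd_dvd_left b M
    have hg0 : 0 < g := Nat.gcd_pos_of_pos_right b hM0
    set k : ℕ := M / g with hk
    have hkg : k * g = M := Nat.div_mul_cancel hgM
    obtain ⟨b', hb'⟩ := hgb
    have hNdvd : N ∣ k * t := by
      refine ⟨b', ?_⟩
      calc k * t = k * (b * n) := by rw [hbn]
        _ = k * (g * b' * n) := by rw [← hb']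
        _ = (k * g) * (b' * n) := by ring
        _ = M * (b' * n) := by rw [hkg]
        _ = (n * M) * b' := by ring
        _ = N * b' := by rw [← hNM]
    have hcast0 : ((k * t : ℕ) : Fin N) = 0 := by
      apply Fin.ext
      simp only [Fin.val_natCast, Fin.val_zero]
      obtain ⟨q, hq⟩ := hNdvd
      rw [hq]
      exact Nat.mul_mod_right N q
    have hfix : (τ ^ (n * k)) a₀ = a₀ := by
      rw [hiter k, hcast0, add_zero]
    have hone : τ ^ (n * k) = 1 :=
      hτ.1.pow_eq_one_iff.mpr ⟨a₀, hmove a₀, hfix⟩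
    have hdvd : N ∣ n * k := by
      rw [← horder]
      exact orderOf_dvd_of_pow_eq_one hone
    have hMk : M ∣ k := by
      rw [hNM] at hdvd
      exact (Nat.mul_dvd_mul_iff_left hn0).mp hdvd
    have hkM : k ∣ M := ⟨g, hkg.symm⟩
    have hkeq : k = M := Nat.dvd_antisymm hkM hMk
    have hMg : M * g = M * 1 := by
      rw [Nat.mul_one]
      calc M * g = k * g := by rw [hkeq]
        _ = M := hkg
    exact Nat.eq_of_mul_eq_mul_left hM0 hMg
  -- the congruence for b
  have hcong_b : v + 1 ≡ a + b * n [MOD N] := by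
    have h1 : v ≡ u + t [MOD N] := (Nat.ModEq.symm e1 : _)
    have h2 : v + 1 ≡ (u + t) + 1 [MOD N] := h1.add_right 1
    have h3 : (u + t) + 1 = a + b * n := by
      rw [hau, ← hbn]
      ring
    rwa [h3] at h2
  refine ⟨b, ⟨hblt, hgcd, hcong_b⟩, ?_⟩
  rintro b' ⟨hb1', hb2', hb3'⟩
  have hbb : a + b * n ≡ a + b' * n [MOD N] := hcong_b.symm.trans hb3'
  have h4 : b * n ≡ b' * n [MOD N] := Nat.ModEq.add_left_cancel' a hbb
  have h4' : b * n ≡ b' * n [MOD M * n] := by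
    rwa [show M * n = N by rw [hNM]; ring]
  have h5 : b ≡ b' [MOD M] := Nat.ModEq.mul_right_cancel' hn0.ne' h4'
  have h6 : b % M = b' % M := h5
  rw [Nat.mod_eq_of_lt hblt, Nat.mod_eq_of_lt hb1'] at h6
  exact h6.symm
end

section
/- Let n be a positive integer, σ₀,ₙ = (1 2 … n) ∈ S_n, and for I ⊆ {1,…,n} let Z_I^{(n)} be the set of n-cycles ω ∈ S_n with ω ≠ σ₀,ₙ⁻¹ such that ωσ₀,ₙ(a) = a for all a ∈ I. For a non-negative integer m ≤ n let F_m^{(n)} be the family of subsets of {1,…,n} of cardinality m, and let Y_m^{(n)} be the union of Z_I^{(n)} over all I ∈ F_m^{(n)}. Then for any positive integer j ≤ n, |Y_j^{(n)}| = ∑_{m=0}^{n−j−1} (−1)^m·binom(j+m−1, j−1)·∑_{I ∈ F_{j+m}^{(n)}} |Z_I^{(n)}| (an equality of integers). -/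
open scoped Classical

noncomputable section

/-- `Z_I^{(n)}`: the set of `n`-cycles `ω ≠ σ₀ₙ⁻¹` in `S_n` with `ωσ₀ₙ(a) = a` for all
`a ∈ I`, where `σ₀ₙ = (1 2 … n)`. -/
def Zset (n : ℕ) (I : Finset (Fin n)) : Finset (Equiv.Perm (Fin n)) :=
  Finset.univ.filter fun ω =>
    ω.IsCycle ∧ ω.support.card = n ∧ ω ≠ (finRotate n)⁻¹ ∧ ∀ a ∈ I, (ω * finRotate n) a = a

/-- `Y_m^{(n)}`: the union of the `Z_I^{(n)}` over all subsets `I` of cardinality `m`. -/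
def Yset (n m : ℕ) : Finset (Equiv.Perm (Fin n)) :=
  (Finset.powersetCard m (Finset.univ : Finset (Fin n))).biUnion fun I => Zset n I

namespace CardYsetAux

open Finset

lemma keyB : ∀ (d i f : ℕ), f = i + 1 + d →
    ∑ m ∈ range (d + 1),
      (-1 : ℤ) ^ m * (Nat.choose (i + m) i : ℤ) * (Nat.choose f (i + 1 + m) : ℤ) = 1 := by
  intro d
  induction d with
  | zero =>
    intro i f hf
    subst hf
    simp
  | succ d ih =>
    intro i f hf
    have hpascal : ∀ m : ℕ, (Nat.choose (i + m) i : ℤ) =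
        (Nat.choose (i + 1 + m) (i + 1) : ℤ) - (Nat.choose (i + m) (i + 1) : ℤ) := by
      intro m
      have : Nat.choose (i + m + 1) (i + 1) = Nat.choose (i + m) i + Nat.choose (i + m) (i + 1) :=
        Nat.choose_succ_succ (i + m) i
      have h2 : i + 1 + m = i + m + 1 := by ring
      rw [h2]
      push_cast [this]
      ring
    have split : ∑ m ∈ range (d + 2),
        (-1 : ℤ) ^ m * (Nat.choose (i + m) i : ℤ) * (Nat.choose f (i + 1 + m) : ℤ) =
        (∑ m ∈ range (d + 2),
          (-1 : ℤ) ^ m * (Nat.choose (i + 1 + m) (i + 1) : ℤ) * (Nat.choose f (i + 1 + m) : ℤ)) -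
        (∑ m ∈ range (d + 2),
          (-1 : ℤ) ^ m * (Nat.choose (i + m) (i + 1) : ℤ) * (Nat.choose f (i + 1 + m) : ℤ)) := by
      rw [← Finset.sum_sub_distrib]
      refine Finset.sum_congr rfl fun m _ => ?_
      rw [hpascal m]; ring
    have hS1 : ∑ m ∈ range (d + 2),
        (-1 : ℤ) ^ m * (Nat.choose (i + 1 + m) (i + 1) : ℤ) * (Nat.choose f (i + 1 + m) : ℤ) = 0 := by
      have hmul : ∀ m ∈ range (d + 2),
          (-1 : ℤ) ^ m * (Nat.choose (i + 1 + m) (i + 1) : ℤ) * (Nat.choose f (i + 1 + m) : ℤ)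
          = (Nat.choose f (i + 1) : ℤ) * ((-1 : ℤ) ^ m * (Nat.choose (d + 1) m : ℤ)) := by
        intro m hm
        have h1 : i + 1 + m ≤ f := by
          simp only [mem_range] at hm; omega
        have := Nat.choose_mul (n := f) (k := i + 1 + m) (s := i + 1) (by omega)
        have h2 : f - (i + 1) = d + 1 := by omega
        have h3 : i + 1 + m - (i + 1) = m := by omega
        rw [h2, h3] at this
        have : (Nat.choose f (i + 1 + m) : ℤ) * (Nat.choose (i + 1 + m) (i + 1) : ℤ)
            = (Nat.choose f (i + 1) : ℤ) * (Nat.choose (d + 1) m : ℤ) := by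
          exact_mod_cast congrArg Nat.cast this
        linear_combination (-1 : ℤ) ^ m * this
      rw [Finset.sum_congr rfl hmul, ← Finset.mul_sum]
      rw [Int.alternating_sum_range_choose]
      simp
    have hS2 : ∑ m ∈ range (d + 2),
        (-1 : ℤ) ^ m * (Nat.choose (i + m) (i + 1) : ℤ) * (Nat.choose f (i + 1 + m) : ℤ) = -1 := by
      rw [Finset.sum_range_succ' (fun m => (-1 : ℤ) ^ m * (Nat.choose (i + m) (i + 1) : ℤ) * (Nat.choose f (i + 1 + m) : ℤ)) (d + 1)]
      have h0 : (-1 : ℤ) ^ 0 * (Nat.choose (i + 0) (i + 1) : ℤ) * (Nat.choose f (i + 1 + 0) : ℤ) = 0 := by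
        simp [Nat.choose_eq_zero_of_lt (by omega : i < i + 1)]
      rw [h0, add_zero]
      have := ih (i + 1) f (by omega)
      have hc : ∀ m ∈ range (d + 1),
          (-1 : ℤ) ^ (m + 1) * (Nat.choose (i + (m + 1)) (i + 1) : ℤ) * (Nat.choose f (i + 1 + (m + 1)) : ℤ)
          = -((-1 : ℤ) ^ m * (Nat.choose (i + 1 + m) (i + 1) : ℤ) * (Nat.choose f (i + 1 + 1 + m) : ℤ)) := by
        intro m _
        have e1 : i + (m + 1) = i + 1 + m := by ring
        have e2 : i + 1 + (m + 1) = i + 1 + 1 + m := by ring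
        rw [e1, e2]; ring
      rw [Finset.sum_congr rfl hc, Finset.sum_neg_distrib, this]
    rw [split, hS1, hS2]; ring

lemma keyId (j f M : ℕ) (hj : 1 ≤ j) (hfM : f < j + M) :
    ∑ m ∈ range M,
      (-1 : ℤ) ^ m * (Nat.choose (j + m - 1) (j - 1) : ℤ) * (Nat.choose f (j + m) : ℤ) =
    if j ≤ f then 1 else 0 := by
  obtain ⟨i, rfl⟩ : ∃ i, j = i + 1 := ⟨j - 1, by omega⟩
  by_cases hjf : i + 1 ≤ f
  · rw [if_pos hjf]
    obtain ⟨d, hd⟩ : ∃ d, f = i + 1 + d := ⟨f - (i + 1), by omega⟩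
    have hsub : ∑ m ∈ range M,
        (-1 : ℤ) ^ m * (Nat.choose (i + 1 + m - 1) (i + 1 - 1) : ℤ) * (Nat.choose f (i + 1 + m) : ℤ)
        = ∑ m ∈ range (d + 1),
        (-1 : ℤ) ^ m * (Nat.choose (i + 1 + m - 1) (i + 1 - 1) : ℤ) * (Nat.choose f (i + 1 + m) : ℤ) := by
      refine (Finset.sum_subset (Finset.range_subset_range.2 (show d + 1 ≤ M by omega)) ?_).symm
      intro m _ hm
      simp only [mem_range, not_lt] at hm
      rw [Nat.choose_eq_zero_of_lt (by omega : f < i + 1 + m)]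
      push_cast; ring
    rw [hsub]
    refine Eq.trans ?_ (keyB d i f hd)
    refine Finset.sum_congr rfl fun m _ => ?_
    have e1 : i + 1 + m - 1 = i + m := by omega
    have e2 : i + 1 - 1 = i := by omega
    rw [e1, e2]
  · rw [if_neg hjf]
    apply Finset.sum_eq_zero
    intro m _
    rw [Nat.choose_eq_zero_of_lt (by omega : f < i + 1 + m)]
    push_cast; ring

/-- The "good" permutations: `n`-cycles different from `σ₀ₙ⁻¹`. -/
def Sset (n : ℕ) : Finset (Equiv.Perm (Fin n)) :=
  Finset.univ.filter fun ω => ω.IsCycle ∧ ω.support.card = n ∧ ω ≠ (finRotate n)⁻¹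

/-- The fixed-point set of `ω * σ₀ₙ`. -/
def Fx (n : ℕ) (ω : Equiv.Perm (Fin n)) : Finset (Fin n) :=
  Finset.univ.filter fun a => (ω * finRotate n) a = a

lemma Zfilter (n : ℕ) (I : Finset (Fin n)) :
    Zset n I = (Sset n).filter fun ω => I ⊆ Fx n ω := by
  ext ω
  simp only [Zset, Sset, Fx, mem_filter, mem_univ, true_and, Finset.subset_iff, and_assoc]

lemma Fx_lt (n : ℕ) (ω : Equiv.Perm (Fin n)) (hω : ω ∈ Sset n) : (Fx n ω).card < n := by
  have hle : (Fx n ω).card ≤ n := by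
    simpa using (Fx n ω).card_le_univ
  rcases lt_or_eq_of_le hle with h | h
  · exact h
  · exfalso
    have huniv : Fx n ω = Finset.univ := by
      apply Finset.eq_univ_of_card
      simpa using h
    have h1 : ω * finRotate n = 1 := by
      apply Equiv.ext
      intro a
      have ha : a ∈ Fx n ω := huniv ▸ Finset.mem_univ a
      simp only [Fx, mem_filter] at ha
      simpa using ha.2
    simp only [Sset, mem_filter] at hω
    exact hω.2.2.2 (mul_eq_one_iff_eq_inv.mp h1)

lemma Zcard_sum (n k : ℕ) :
    ∑ I ∈ Finset.powersetCard k (Finset.univ : Finset (Fin n)), ((Zset n I).card : ℤ)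
      = ∑ ω ∈ Sset n, (Nat.choose ((Fx n ω).card) k : ℤ) := by
  have h1 : ∀ I : Finset (Fin n), ((Zset n I).card : ℤ)
      = ∑ ω ∈ Sset n, if I ⊆ Fx n ω then (1 : ℤ) else 0 := by
    intro I
    rw [Zfilter, Finset.sum_boole]
  rw [Finset.sum_congr rfl fun I _ => h1 I, Finset.sum_comm]
  refine Finset.sum_congr rfl fun ω _ => ?_
  rw [Finset.sum_boole]
  congr 1
  have : (Finset.powersetCard k (Finset.univ : Finset (Fin n))).filter (fun I => I ⊆ Fx n ω)
      = Finset.powersetCard k (Fx n ω) := by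
    ext I
    simp only [mem_filter, mem_powersetCard]
    exact ⟨fun h => ⟨h.2, h.1.2⟩, fun h => ⟨⟨Finset.subset_univ I, h.2⟩, h.1⟩⟩
  rw [this, Finset.card_powersetCard]

lemma Yfilter (n j : ℕ) :
    Yset n j = (Sset n).filter fun ω => j ≤ (Fx n ω).card := by
  ext ω
  simp only [Yset, mem_biUnion, mem_powersetCard, mem_filter]
  constructor
  · rintro ⟨I, ⟨-, hIcard⟩, hωI⟩
    rw [Zfilter, mem_filter] at hωI
    exact ⟨hωI.1, hIcard ▸ Finset.card_le_card hωI.2⟩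
  · rintro ⟨hω, hcard⟩
    obtain ⟨I, hIsub, hIcard⟩ := Finset.exists_subset_card_eq hcard
    exact ⟨I, ⟨Finset.subset_univ I, hIcard⟩, by rw [Zfilter, mem_filter]; exact ⟨hω, hIsub⟩⟩

end CardYsetAux

/-- **Lemma 8.** For `1 ≤ j ≤ n`,
`|Y_j^{(n)}| = ∑_{m=0}^{n−j−1} (−1)^m·C(j+m−1, j−1)·∑_{|I| = j+m} |Z_I^{(n)}|`. -/
theorem card_Yset_eq_alternating_sum (n j : ℕ) (hn : 0 < n) (hj : 1 ≤ j) (hjn : j ≤ n) :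
    ((Yset n j).card : ℤ) =
      ∑ m ∈ Finset.range (n - j),
        (-1 : ℤ) ^ m * (Nat.choose (j + m - 1) (j - 1) : ℤ) *
          ∑ I ∈ Finset.powersetCard (j + m) (Finset.univ : Finset (Fin n)),
            ((Zset n I).card : ℤ) := by
  open CardYsetAux in
  calc ((Yset n j).card : ℤ)
      = ∑ ω ∈ CardYsetAux.Sset n, if j ≤ (CardYsetAux.Fx n ω).card then (1 : ℤ) else 0 := by
        rw [CardYsetAux.Yfilter, Finset.sum_boole]
    _ = ∑ ω ∈ CardYsetAux.Sset n, ∑ m ∈ Finset.range (n - j),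
          (-1 : ℤ) ^ m * (Nat.choose (j + m - 1) (j - 1) : ℤ) *
            (Nat.choose ((CardYsetAux.Fx n ω).card) (j + m) : ℤ) := by
        refine Finset.sum_congr rfl fun ω hω => ?_
        rw [CardYsetAux.keyId j ((CardYsetAux.Fx n ω).card) (n - j) hj
          (by have := CardYsetAux.Fx_lt n ω hω; omega)]
    _ = ∑ m ∈ Finset.range (n - j),
          (-1 : ℤ) ^ m * (Nat.choose (j + m - 1) (j - 1) : ℤ) *
            ∑ I ∈ Finset.powersetCard (j + m) (Finset.univ : Finset (Fin n)),
              ((Zset n I).card : ℤ) := by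
        rw [Finset.sum_comm]
        refine Finset.sum_congr rfl fun m _ => ?_
        rw [CardYsetAux.Zcard_sum n (j + m), Finset.mul_sum]
end
end

section
/- Let n be a positive integer, σ₀,ₙ = (1 2 … n) ∈ S_n, and let I ⊆ {1,…,n} with |I| < n. Then the number of n-cycles ω ∈ S_n with ω ≠ σ₀,ₙ⁻¹ such that ωσ₀,ₙ(a) = a for all a ∈ I equals (n − |I| − 1)! − 1. -/
open scoped Classical

open Equiv Equiv.Perm Finset

variable {α : Type*} [Fintype α] [DecidableEq α]

/-- Inserting a fixed point `x` into a cycle `g` right before `b` keeps the support formula. -/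
lemma support_swap_mul_of_fixed {g : Perm α} {x b : α} (hx : g x = x) (hb : g b ≠ b) :
    (Equiv.swap x b * g).support = insert x g.support := by
  have hxb : x ≠ b := fun h => hb (by rw [← h, hx])
  ext z
  simp only [Perm.mem_support, Finset.mem_insert, Perm.mul_apply]
  by_cases hzx : z = x
  · subst hzx
    simp [hx, Equiv.swap_apply_left, hxb.symm, hxb]
  · have hgzx : g z ≠ x := fun h => hzx (g.injective (h.trans hx.symm))
    by_cases hgzb : g z = b
    · have hrw : Equiv.swap x b (g z) = x := by rw [hgzb, Equiv.swap_apply_right]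
      rw [hrw]
      have h2 : g z ≠ z := fun hh => hb (by rw [show b = z from hgzb.symm.trans hh]; exact hh)
      simp [Ne.symm hzx, h2]
    · rw [Equiv.swap_apply_of_ne_of_ne hgzx hgzb]
      simp [hzx]

lemma isCycle_swap_mul_of_fixed {g : Perm α} (hg : g.IsCycle) {x b : α} (hx : g x = x)
    (hb : g b ≠ b) : (Equiv.swap x b * g).IsCycle := by
  set f := Equiv.swap x b * g with hf
  have hxb : x ≠ b := fun h => hb (by rw [← h, hx])
  have hfx : f x = b := by rw [hf]; simp [Perm.mul_apply, hx, Equiv.swap_apply_left]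
  have key : ∀ i : ℕ, ∃ j : ℕ, (f ^ j) x = (g ^ i) b := by
    intro i
    induction i with
    | zero => exact ⟨1, by simpa using hfx⟩
    | succ i ih =>
      obtain ⟨j, hj⟩ := ih
      have hz : (g ^ i) b ∈ g.support := Perm.pow_apply_mem_support.2 (Perm.mem_support.2 hb)
      have hzx : (g ^ i) b ≠ x := fun h => by
        rw [h] at hz; exact (Perm.mem_support.1 hz) hx
      have hstep : (g ^ (i + 1)) b = g ((g ^ i) b) := by
        rw [pow_succ']; rfl
      by_cases hc : g ((g ^ i) b) = b
      · refine ⟨j + 2, ?_⟩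
        have h1 : f ((g ^ i) b) = x := by
          rw [hf, Perm.mul_apply, hc, Equiv.swap_apply_right]
        have hexp : (f ^ (j + 2)) x = f (f ((f ^ j) x)) := by
          rw [pow_succ', pow_succ']; rfl
        rw [hexp, hj, h1, hfx, hstep, hc]
      · refine ⟨j + 1, ?_⟩
        have hgzx : g ((g ^ i) b) ≠ x := fun h => hzx (g.injective (h.trans hx.symm))
        have h1 : f ((g ^ i) b) = g ((g ^ i) b) := by
          rw [hf, Perm.mul_apply, Equiv.swap_apply_of_ne_of_ne hgzx hc]
        have hexp : (f ^ (j + 1)) x = f ((f ^ j) x) := by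
          rw [pow_succ']; rfl
        rw [hexp, hj, h1, hstep]
  refine ⟨x, by rw [hfx]; exact Ne.symm hxb, fun y hy => ?_⟩
  have hymem : y ∈ f.support := Perm.mem_support.2 hy
  rw [support_swap_mul_of_fixed hx hb] at hymem
  rcases Finset.mem_insert.1 hymem with h | h
  · exact h ▸ Equiv.Perm.SameCycle.refl f y
  · obtain ⟨i, hi⟩ := hg.exists_pow_eq hb (Perm.mem_support.1 h)
    obtain ⟨j, hj⟩ := key i
    exact ⟨(j : ℤ), by rw [zpow_natCast, hj, hi]⟩

lemma eq_of_card_support_two {f g : Perm α} (hf2 : f.support.card = 2)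
    (h : f.support = g.support) (hg2 : g.support.card = 2) : f = g := by
  obtain ⟨a, b, hab, rfl⟩ := Perm.card_support_eq_two.1 hf2
  obtain ⟨u, v, huv, rfl⟩ := Perm.card_support_eq_two.1 hg2
  rw [Perm.support_swap hab, Perm.support_swap huv] at h
  have ha : a ∈ ({u, v} : Finset α) := h ▸ Finset.mem_insert_self a {b}
  have hb : b ∈ ({u, v} : Finset α) := h ▸ Finset.mem_insert_of_mem (Finset.mem_singleton_self b)
  simp only [Finset.mem_insert, Finset.mem_singleton] at ha hb
  rcases ha with rfl | rfl
  · rcases hb with rfl | rfl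
    · exact absurd rfl hab
    · rfl
  · rcases hb with rfl | rfl
    · exact Equiv.swap_comm _ _
    · exact absurd rfl hab

lemma count_cycles_prescribed (m : ℕ) : ∀ s : Finset α, s.card = m →
    ∀ c : Perm α, c.IsCycle → c.support = s →
    ∀ J : Finset α, J ⊆ s → J.card < s.card →
    (Finset.univ.filter fun ω : Perm α =>
        ω.IsCycle ∧ ω.support = s ∧ ∀ x ∈ J, ω x = c x).card
      = Nat.factorial (s.card - J.card - 1) := by
  induction m using Nat.strong_induction_on with
  | _ m IH =>
  intro s hsm c₀ hc₀ hc₀s J hJs hJ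
  have hs2 : 2 ≤ s.card := hc₀s ▸ hc₀.two_le_card_support
  -- the key step: nonempty prescription sets
  have step : ∀ c : Perm α, c.IsCycle → c.support = s →
      ∀ J' : Finset α, J' ⊆ s → J'.Nonempty → J'.card < s.card →
      (Finset.univ.filter fun ω : Perm α =>
          ω.IsCycle ∧ ω.support = s ∧ ∀ x ∈ J', ω x = c x).card
        = Nat.factorial (s.card - J'.card - 1) := by
    intro c hc hcs J' hJ's hJ'ne hJ'
    obtain ⟨x, hxJ⟩ := hJ'ne
    have hJ'1 : 1 ≤ J'.card := Finset.card_pos.2 ⟨x, hxJ⟩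
    have hxs : x ∈ s := hJ's hxJ
    have hxc : x ∈ c.support := by rw [hcs]; exact hxs
    have hcx : c x ≠ x := Perm.mem_support.1 hxc
    rcases eq_or_lt_of_le hs2 with h2 | h3
    · -- |s| = 2 : the unique cycle with support s is c itself
      have hJ'c : J'.card = 1 := by omega
      have hset : (Finset.univ.filter fun ω : Perm α =>
          ω.IsCycle ∧ ω.support = s ∧ ∀ x ∈ J', ω x = c x) = {c} := by
        ext ω
        simp only [Finset.mem_filter, Finset.mem_univ, true_and, Finset.mem_singleton]
        constructor
        · rintro ⟨h1, hsupp, -⟩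
          exact eq_of_card_support_two (by rw [hsupp, ← h2]) (hsupp.trans hcs.symm)
            (by rw [hcs, ← h2])
        · rintro rfl
          exact ⟨hc, hcs, fun _ _ => rfl⟩
      rw [hset, Finset.card_singleton, ← h2, hJ'c]
      rfl
    · -- |s| ≥ 3 : contract at x
      have hccx : c (c x) ≠ x := by
        intro h
        have heq := hc.eq_swap_of_apply_apply_eq_self hcx h
        have h2 : s.card = 2 := by
          rw [← hcs, heq, Perm.support_swap (Ne.symm hcx), Finset.card_pair (Ne.symm hcx)]
        omega
      have hc'cyc : (Equiv.swap x (c x) * c).IsCycle := hc.swap_mul hcx hccx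
      have hc'supp : (Equiv.swap x (c x) * c).support = s.erase x := by
        rw [Perm.support_swap_mul_eq c x hccx, hcs, Finset.erase_eq]
      have hes : (s.erase x).card = s.card - 1 := Finset.card_erase_of_mem hxs
      have hJe : J'.erase x ⊆ s.erase x := Finset.erase_subset_erase x hJ's
      have hJecard : (J'.erase x).card = J'.card - 1 := Finset.card_erase_of_mem hxJ
      have hlt : (J'.erase x).card < (s.erase x).card := by rw [hJecard, hes]; omega
      have IHres := IH (s.card - 1) (by omega) (s.erase x) hes
        (Equiv.swap x (c x) * c) hc'cyc hc'supp (J'.erase x) hJe hlt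
      have hbij : (Finset.univ.filter fun ω : Perm α =>
          ω.IsCycle ∧ ω.support = s ∧ ∀ y ∈ J', ω y = c y).card
          = (Finset.univ.filter fun ω : Perm α =>
          ω.IsCycle ∧ ω.support = s.erase x ∧
            ∀ y ∈ J'.erase x, ω y = (Equiv.swap x (c x) * c) y).card := by
        refine Finset.card_bij' (fun ω _ => Equiv.swap x (c x) * ω)
          (fun ω _ => Equiv.swap x (c x) * ω) ?_ ?_ ?_ ?_
        · -- forward map lands in target
          intro ω hω
          obtain ⟨-, h1, h2, h3⟩ := Finset.mem_filter.1 hω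
          have hωx : ω x = c x := h3 x hxJ
          have hωxne : ω x ≠ x := Perm.mem_support.1 (by rw [h2]; exact hxs)
          have hωωx : ω (ω x) ≠ x := by
            intro h
            have heq := h1.eq_swap_of_apply_apply_eq_self hωxne h
            have : s.card = 2 := by
              rw [← h2, heq, Perm.support_swap (Ne.symm hωxne),
                Finset.card_pair (Ne.symm hωxne)]
            omega
          refine Finset.mem_filter.2 ⟨Finset.mem_univ _, ?_, ?_, ?_⟩
          · rw [← hωx]; exact h1.swap_mul hωxne hωωx
          · rw [← hωx, Perm.support_swap_mul_eq ω x hωωx, h2, Finset.erase_eq]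
          · intro y hy
            obtain ⟨-, hyJ⟩ := Finset.mem_erase.1 hy
            rw [Perm.mul_apply, Perm.mul_apply, h3 y hyJ]
        · -- backward map lands in source
          intro ω' hω'
          obtain ⟨-, h1, h2, h3⟩ := Finset.mem_filter.1 hω'
          have hx0 : ω' x = x :=
            Perm.notMem_support.1 (by rw [h2]; exact Finset.notMem_erase x s)
          have hcxs : c x ∈ s := by rw [← hcs]; exact Perm.apply_mem_support.2 hxc
          have hb' : ω' (c x) ≠ c x :=
            Perm.mem_support.1 (by rw [h2]; exact Finset.mem_erase.2 ⟨hcx, hcxs⟩)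
          refine Finset.mem_filter.2 ⟨Finset.mem_univ _, ?_, ?_, ?_⟩
          · exact isCycle_swap_mul_of_fixed h1 hx0 hb'
          · rw [support_swap_mul_of_fixed hx0 hb', h2, Finset.insert_erase hxs]
          · intro y hy
            by_cases hyx : y = x
            · subst hyx
              rw [Perm.mul_apply, hx0, Equiv.swap_apply_left]
            · have hmem : y ∈ J'.erase x := Finset.mem_erase.2 ⟨hyx, hy⟩
              rw [Perm.mul_apply, h3 y hmem, Perm.mul_apply, Equiv.swap_apply_self]
        · intro ω _
          show Equiv.swap x (c x) * (Equiv.swap x (c x) * ω) = ω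
          rw [← mul_assoc, Equiv.swap_mul_self, one_mul]
        · intro ω _
          show Equiv.swap x (c x) * (Equiv.swap x (c x) * ω) = ω
          rw [← mul_assoc, Equiv.swap_mul_self, one_mul]
      rw [hbij, IHres, hes, hJecard]
      congr 1
      omega
  rcases J.eq_empty_or_nonempty with rfl | hne
  · -- empty prescription: count all cycles with support s
    obtain ⟨x, hxs⟩ := Finset.card_pos.1 (by omega : 0 < s.card)
    have hmaps : ∀ ω ∈ (Finset.univ.filter fun ω : Perm α =>
        ω.IsCycle ∧ ω.support = s ∧ ∀ y ∈ (∅ : Finset α), ω y = c₀ y),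
        ω x ∈ s.erase x := by
      intro ω hω
      obtain ⟨-, -, h2, -⟩ := Finset.mem_filter.1 hω
      have hx : x ∈ ω.support := by rw [h2]; exact hxs
      exact Finset.mem_erase.2 ⟨Perm.mem_support.1 hx, by
        rw [← h2]; exact Perm.apply_mem_support.2 hx⟩
    rw [Finset.card_eq_sum_card_fiberwise hmaps]
    have hcxs : c₀ x ∈ s := by
      rw [← hc₀s]; exact Perm.apply_mem_support.2 (by rw [hc₀s]; exact hxs)
    have hcx : c₀ x ≠ x := Perm.mem_support.1 (by rw [hc₀s]; exact hxs)
    have hfiber : ∀ b ∈ s.erase x,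
        ((Finset.univ.filter fun ω : Perm α =>
          ω.IsCycle ∧ ω.support = s ∧ ∀ y ∈ (∅ : Finset α), ω y = c₀ y).filter
            fun ω => ω x = b).card = Nat.factorial (s.card - 2) := by
      intro b hb
      obtain ⟨hbx, hbs⟩ := Finset.mem_erase.1 hb
      set σb := Equiv.swap (c₀ x) b with hσb
      have hcb_cyc : (σb * c₀ * σb).IsCycle := by
        have := hc₀.conj (g := σb)
        rwa [Equiv.swap_inv] at this
      have hmapsb : ∀ z ∈ s, σb z ∈ s := by
        intro z hz
        rcases eq_or_ne z (c₀ x) with rfl | h1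
        · rw [hσb, Equiv.swap_apply_left]; exact hbs
        · rcases eq_or_ne z b with rfl | h2
          · rw [hσb, Equiv.swap_apply_right]; exact hcxs
          · rwa [hσb, Equiv.swap_apply_of_ne_of_ne h1 h2]
      have hmapeq : s.map σb.toEmbedding = s := by
        apply Finset.eq_of_subset_of_card_le
        · intro z hz
          obtain ⟨w, hw, rfl⟩ := Finset.mem_map.1 hz
          exact hmapsb w hw
        · rw [Finset.card_map]
      have hcb_supp : (σb * c₀ * σb).support = s := by
        have := Perm.support_conj (σ := σb) (τ := c₀)
        rw [Equiv.swap_inv (x := c₀ x) (y := b)] at this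
        rw [this, hc₀s, hmapeq]
      have hcbx : (σb * c₀ * σb) x = b := by
        have hx1 : σb x = x :=
          Equiv.swap_apply_of_ne_of_ne (Ne.symm hcx) (fun h => hbx h.symm)
        rw [Perm.mul_apply, Perm.mul_apply, hx1, hσb, Equiv.swap_apply_left]
      have hfeq : ((Finset.univ.filter fun ω : Perm α =>
          ω.IsCycle ∧ ω.support = s ∧ ∀ y ∈ (∅ : Finset α), ω y = c₀ y).filter
            fun ω => ω x = b)
          = Finset.univ.filter fun ω : Perm α =>
            ω.IsCycle ∧ ω.support = s ∧ ∀ y ∈ ({x} : Finset α), ω y = (σb * c₀ * σb) y := by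
        rw [Finset.filter_filter]
        apply Finset.filter_congr
        intro ω _
        constructor
        · rintro ⟨⟨hc1, hc2, -⟩, hc3⟩
          refine ⟨hc1, hc2, ?_⟩
          intro y hy
          rw [Finset.mem_singleton] at hy
          subst hy
          rw [hcbx]; exact hc3
        · rintro ⟨hc1, hc2, hc3⟩
          have hx3 := hc3 x (Finset.mem_singleton_self x)
          rw [hcbx] at hx3
          exact ⟨⟨hc1, hc2, fun y hy => absurd hy (Finset.notMem_empty y)⟩, hx3⟩
      rw [hfeq, step (σb * c₀ * σb) hcb_cyc hcb_supp {x}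
        (Finset.singleton_subset_iff.2 hxs) ⟨x, Finset.mem_singleton_self x⟩
        (by rw [Finset.card_singleton]; omega), Finset.card_singleton]
      congr 1
    rw [Finset.sum_congr rfl hfiber, Finset.sum_const, Finset.card_erase_of_mem hxs,
      smul_eq_mul, Finset.card_empty]
    have h1 : s.card - 0 - 1 = (s.card - 2) + 1 := by omega
    rw [h1, Nat.factorial_succ]
    congr 1
  · exact step c₀ hc₀ hc₀s J hJs hne hJ

/-- **Lemma 9.** For `σ₀ₙ = (1 2 … n)` and `I ⊆ {1,…,n}` with `|I| < n`, the number of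
`n`-cycles `ω ≠ σ₀ₙ⁻¹` in `S_n` such that `ωσ₀ₙ` fixes every element of `I` equals
`(n − |I| − 1)! − 1`. -/
theorem card_Zset_eq (n : ℕ) (hn : 0 < n) (I : Finset (Fin n)) (hI : I.card < n) :
    (Finset.univ.filter fun ω : Equiv.Perm (Fin n) =>
        ω.IsCycle ∧ ω.support.card = n ∧ ω ≠ (finRotate n)⁻¹ ∧
          ∀ a ∈ I, (ω * finRotate n) a = a).card =
      Nat.factorial (n - I.card - 1) - 1 := by
  rcases Nat.lt_or_ge n 2 with h1 | h2
  · have hn1 : n = 1 := by omega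
    subst hn1
    have hem : (Finset.univ.filter fun ω : Equiv.Perm (Fin 1) =>
        ω.IsCycle ∧ ω.support.card = 1 ∧ ω ≠ (finRotate 1)⁻¹ ∧
          ∀ a ∈ I, (ω * finRotate 1) a = a) = ∅ := by
      rw [Finset.filter_eq_empty_iff]
      rintro ω - ⟨-, hcard, -, -⟩
      exact ω.card_support_ne_one hcard
    rw [hem, Finset.card_empty]
    have hI0 : I.card = 0 := by omega
    rw [hI0]
    rfl
  · set c := (finRotate n)⁻¹ with hcdef
    have hrot : (finRotate n).IsCycle := isCycle_finRotate_of_le h2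
    have hc : c.IsCycle := hrot.inv
    have hcs : c.support = Finset.univ := by
      rw [hcdef, Perm.support_inv, support_finRotate_of_le h2]
    have hcard_univ : (Finset.univ : Finset (Fin n)).card = n := by
      simp [Finset.card_univ]
    set J := I.image (finRotate n) with hJdef
    have hJcard : J.card = I.card := Finset.card_image_of_injective I (finRotate n).injective
    have hmain := count_cycles_prescribed n Finset.univ hcard_univ c hc hcs J
      (Finset.subset_univ J) (by rw [hJcard, hcard_univ]; exact hI)
    have hcmem : c ∈ Finset.univ.filter fun ω : Equiv.Perm (Fin n) =>
        ω.IsCycle ∧ ω.support = Finset.univ ∧ ∀ x ∈ J, ω x = c x :=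
      Finset.mem_filter.2 ⟨Finset.mem_univ _, hc, hcs, fun _ _ => rfl⟩
    have hceq : (Finset.univ.filter fun ω : Equiv.Perm (Fin n) =>
        ω.IsCycle ∧ ω.support.card = n ∧ ω ≠ c ∧
          ∀ a ∈ I, (ω * finRotate n) a = a)
        = (Finset.univ.filter fun ω : Equiv.Perm (Fin n) =>
            ω.IsCycle ∧ ω.support = Finset.univ ∧ ∀ x ∈ J, ω x = c x).erase c := by
      ext ω
      simp only [Finset.mem_filter, Finset.mem_univ, true_and, Finset.mem_erase]
      constructor
      · rintro ⟨hcyc, hsc, hne, hfix⟩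
        refine ⟨hne, hcyc, ?_, ?_⟩
        · have h : ω.support.card = Fintype.card (Fin n) := by
            rw [Fintype.card_fin]; exact hsc
          exact (Finset.card_eq_iff_eq_univ _).1 h
        · intro x hx
          obtain ⟨a, ha, rfl⟩ := Finset.mem_image.1 hx
          have h := hfix a ha
          rw [Equiv.Perm.mul_apply] at h
          rw [h, hcdef]
          exact (Equiv.symm_apply_apply _ _).symm
      · rintro ⟨hne, hcyc, hsupp, hfix⟩
        refine ⟨hcyc, by rw [hsupp, hcard_univ], hne, ?_⟩
        intro a ha
        have h := hfix (finRotate n a) (Finset.mem_image_of_mem _ ha)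
        rw [Equiv.Perm.mul_apply, h, hcdef]
        exact Equiv.symm_apply_apply _ _
    rw [hcard_univ, hJcard] at hmain
    rw [hceq, Finset.card_erase_of_mem hcmem]
    have h' : (Finset.univ.filter fun ω : Equiv.Perm (Fin n) =>
        ω.IsCycle ∧ ω.support = Finset.univ ∧ ∀ x ∈ J, ω x = c x).card
        = Nat.factorial (n - I.card - 1) := by
      rw [← hmain]
      congr 1
      ext ω
      simp only [Finset.mem_filter]
    rw [h']
end
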